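/- arXiv:2506.20121 — 2 statements merged into one kernel-verified Lean document; each statement's English description precedes it below -/
import Mathlib

section
/- Let ψ : ℝ^d → ℂ be a Schwartz function with ∂^α ψ(0) = 0 for every multi-index α. Then the function ξ ↦ log(|ξ|²) · ψ(ξ), defined for ξ ≠ 0 and extended by 0 at ξ = 0, is again a Schwartz function with all derivatives vanishing at the origin. -/
open Filter Asymptotics Set
open scoped ContDiff Nat Topology



/-- Smooth extension across the origin: if `h` is smooth away from `0`, vanishes at `0`,
and all its iterated derivatives (within the complement of `0`) are `O(‖x‖^2)` near `0`,
then `h` is `C^m` globally with all derivatives up to `m` vanishing at `0`. -/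
theorem ext_across_zero {E : Type} [NormedAddCommGroup E] [NormedSpace ℝ E] (m : ℕ) :
    ∀ {F : Type} [NormedAddCommGroup F] [NormedSpace ℝ F] (h : E → F),
    h 0 = 0 →
    ContDiffOn ℝ ∞ h ({0}ᶜ : Set E) →
    (∀ n : ℕ, ∃ C : ℝ, ∀ x : E, 0 < ‖x‖ → ‖x‖ ≤ 1 →
      ‖iteratedFDerivWithin ℝ n h ({0}ᶜ : Set E) x‖ ≤ C * ‖x‖ ^ 2) →
    ContDiff ℝ m h ∧ ∀ n : ℕ, n ≤ m → iteratedFDeriv ℝ n h 0 = 0 := by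
  induction m with
  | zero =>
    intro F _ _ h h0 hsm hbd
    obtain ⟨C, hC⟩ := hbd 0
    have hbd0 : ∀ x : E, 0 < ‖x‖ → ‖x‖ ≤ 1 → ‖h x‖ ≤ max C 0 * ‖x‖ ^ 2 := by
      intro x hx hx1
      have := hC x hx hx1
      rw [norm_iteratedFDerivWithin_zero] at this
      refine this.trans (by gcongr; exact le_max_left _ _)
    have hO : (fun x : E => h x) =O[𝓝 0] fun x => ‖x‖ ^ 2 := by
      rw [isBigO_iff]
      refine ⟨max C 0, ?_⟩
      filter_upwards [Metric.closedBall_mem_nhds (0 : E) one_pos] with x hx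
      rw [mem_closedBall_zero_iff] at hx
      rcases eq_or_ne x 0 with rfl | hx0
      · simp [h0]
      · have := hbd0 x (by simpa [norm_pos_iff] using hx0) hx
        simpa [abs_of_nonneg (sq_nonneg ‖x‖)] using this
    have hcont : Continuous h := by
      rw [continuous_iff_continuousAt]
      intro x
      rcases eq_or_ne x 0 with rfl | hx0
      · have : Tendsto h (𝓝 0) (𝓝 0) := by
          apply hO.trans_tendsto
          simpa using ((continuous_norm.tendsto (0:E)).pow 2).congr' (by simp) |>.mono_left le_rfl
        simpa [ContinuousAt, h0] using this
      · exact (hsm.continuousOn.continuousAt (isOpen_compl_singleton.mem_nhds hx0))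
    refine ⟨contDiff_zero.2 hcont, ?_⟩
    intro n hn
    interval_cases n
    ext1 v
    simp [iteratedFDeriv_zero_apply, h0]
  | succ m ih =>
    intro F _ _ h h0 hsm hbd
    have hso : IsOpen ({0}ᶜ : Set E) := isOpen_compl_singleton
    have hsu : UniqueDiffOn ℝ ({0}ᶜ : Set E) := hso.uniqueDiffOn
    -- O(‖x‖²) bound for h itself
    obtain ⟨C, hC⟩ := hbd 0
    have hbd0 : ∀ x : E, ‖x‖ ≤ 1 → ‖h x‖ ≤ max C 0 * ‖x‖ ^ 2 := by
      intro x hx1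
      rcases eq_or_ne x 0 with rfl | hx0
      · simp [h0]
      · have := hC x (by simpa [norm_pos_iff] using hx0) hx1
        rw [norm_iteratedFDerivWithin_zero] at this
        refine this.trans (by gcongr; exact le_max_left _ _)
    -- differentiability at 0
    have hder0 : HasFDerivAt h (0 : E →L[ℝ] F) 0 := by
      rw [hasFDerivAt_iff_isLittleO_nhds_zero]
      simp only [h0, zero_add, sub_zero, ContinuousLinearMap.zero_apply]
      have hO : (fun x : E => h x) =O[𝓝 0] fun x => ‖x‖ ^ 2 := by
        rw [isBigO_iff]
        refine ⟨max C 0, ?_⟩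
        filter_upwards [Metric.closedBall_mem_nhds (0 : E) one_pos] with x hx
        rw [mem_closedBall_zero_iff] at hx
        simpa [abs_of_nonneg (sq_nonneg ‖x‖)] using hbd0 x hx
      refine hO.trans_isLittleO ?_
      rw [← isLittleO_norm_right]
      rw [isLittleO_iff]
      intro c hc
      filter_upwards [Metric.closedBall_mem_nhds (0 : E) hc] with x hx
      rw [mem_closedBall_zero_iff] at hx
      have : ‖x‖ ^ 2 ≤ c * ‖x‖ := by
        rw [pow_two]
        exact mul_le_mul_of_nonneg_right hx (norm_nonneg x)
      simpa [abs_of_nonneg (sq_nonneg ‖x‖)] using this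
    have hdiff : Differentiable ℝ h := by
      intro x
      rcases eq_or_ne x 0 with rfl | hx0
      · exact hder0.differentiableAt
      · exact ((hsm.differentiableOn (by simp)).differentiableAt
          (hso.mem_nhds hx0))
    set h' := fderiv ℝ h with hh'
    have h'0 : h' 0 = 0 := hder0.fderiv
    have h'sm : ContDiffOn ℝ ∞ h' ({0}ᶜ : Set E) :=
      hsm.fderiv_of_isOpen hso (by simp)
    have heq : EqOn (fderivWithin ℝ h ({0}ᶜ : Set E)) h' ({0}ᶜ : Set E) := by
      intro y hy
      exact fderivWithin_of_isOpen hso hy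
    have h'bd : ∀ n : ℕ, ∃ C : ℝ, ∀ x : E, 0 < ‖x‖ → ‖x‖ ≤ 1 →
        ‖iteratedFDerivWithin ℝ n h' ({0}ᶜ : Set E) x‖ ≤ C * ‖x‖ ^ 2 := by
      intro n
      obtain ⟨C, hC⟩ := hbd (n + 1)
      refine ⟨C, fun x hx hx1 => ?_⟩
      have hxs : x ∈ ({0}ᶜ : Set E) := by simpa [norm_pos_iff] using hx
      calc ‖iteratedFDerivWithin ℝ n h' ({0}ᶜ : Set E) x‖
          = ‖iteratedFDerivWithin ℝ n (fderivWithin ℝ h ({0}ᶜ : Set E)) ({0}ᶜ : Set E) x‖ := by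
            rw [iteratedFDerivWithin_congr heq.symm hxs]
        _ = ‖iteratedFDerivWithin ℝ (n + 1) h ({0}ᶜ : Set E) x‖ :=
            norm_iteratedFDerivWithin_fderivWithin hsu hxs
        _ ≤ C * ‖x‖ ^ 2 := hC x hx hx1
    obtain ⟨h'cd, h'van⟩ := ih h' h'0 h'sm h'bd
    constructor
    · have : ((m + 1 : ℕ) : WithTop ℕ∞) = (m : WithTop ℕ∞) + 1 := by exact_mod_cast rfl
      rw [this, contDiff_succ_iff_fderiv]
      refine ⟨hdiff, ?_, h'cd⟩
      intro hω
      simp at hω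
    · intro n hn
      match n with
      | 0 =>
        ext1 v
        simp [iteratedFDeriv_zero_apply, h0]
      | (k + 1) =>
        have hk : k ≤ m := by omega
        have h2 : ‖iteratedFDeriv ℝ (k + 1) h 0‖ = 0 := by
          rw [← norm_iteratedFDeriv_fderiv, h'van k hk]; simp
        exact norm_eq_zero.mp h2


lemma aux_iteratedDeriv_log (n : ℕ) : ∀ t : ℝ, t ≠ 0 →
    iteratedDeriv (n + 1) Real.log t = (-1) ^ n * n ! * t ^ (-(n + 1 : ℤ)) := by
  induction n with
  | zero =>
    intro t ht
    rw [show (0:ℕ) + 1 = 1 from rfl, iteratedDeriv_one, Real.deriv_log]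
    simp [zpow_neg]
  | succ n ihn =>
    intro t ht
    rw [iteratedDeriv_succ]
    have hev : iteratedDeriv (n + 1) Real.log =ᶠ[nhds t]
        fun u : ℝ => (-1 : ℝ) ^ n * n ! * u ^ (-(n + 1 : ℤ)) := by
      filter_upwards [isOpen_compl_singleton.mem_nhds (by simpa using ht)] with u hu
      exact ihn u hu
    rw [hev.deriv_eq]
    have hd := (hasDerivAt_zpow (-(n + 1 : ℤ)) t (Or.inl ht)).const_mul
      ((-1 : ℝ) ^ n * (n ! : ℝ))
    rw [hd.deriv]
    have hfac : ((n + 1 : ℕ) ! : ℝ) = (n + 1 : ℝ) * n ! := by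
      rw [Nat.factorial_succ]; push_cast; ring
    have hexp : (-(n + 1 : ℤ)) - 1 = -(n + 1 + 1 : ℤ) := by ring
    rw [hexp, hfac]
    push_cast
    ring

lemma aux_norm_iteratedFDeriv_log {i : ℕ} (hi : 1 ≤ i) {t : ℝ} (ht : t ≠ 0) :
    ‖iteratedFDeriv ℝ i Real.log t‖ ≤ (i ! : ℝ) * |t|⁻¹ ^ i := by
  obtain ⟨j, rfl⟩ : ∃ j, i = j + 1 := ⟨i - 1, by omega⟩
  rw [norm_iteratedFDeriv_eq_norm_iteratedDeriv, aux_iteratedDeriv_log j t ht]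
  have : ‖(-1 : ℝ) ^ j * (j ! : ℝ) * t ^ (-(j + 1 : ℤ))‖
      = (j ! : ℝ) * |t|⁻¹ ^ (j + 1) := by
    rw [norm_mul, norm_mul]
    rw [norm_pow, norm_neg, norm_one, one_pow, one_mul]
    rw [show (-(↑j + 1) : ℤ) = -((j + 1 : ℕ) : ℤ) by push_cast; ring, zpow_neg,
      zpow_natCast]
    rw [Real.norm_eq_abs, Real.norm_eq_abs, abs_inv, abs_pow, inv_pow, Nat.abs_cast]
  rw [this]
  have hfac : (j ! : ℝ) ≤ ((j + 1)! : ℝ) := by exact_mod_cast Nat.factorial_le (by omega)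
  exact mul_le_mul_of_nonneg_right hfac (by positivity)

section Q

set_option maxHeartbeats 1000000
set_option synthInstance.maxHeartbeats 400000

variable {E : Type} [NormedAddCommGroup E] [InnerProductSpace ℝ E]

/-- Bound on the iterated derivatives of `‖·‖²`. -/
lemma aux_norm_iteratedFDeriv_norm_sq (x : E) {i : ℕ} (hi : 1 ≤ i) :
    ‖iteratedFDeriv ℝ i (fun y : E => ‖y‖ ^ 2) x‖ ≤ (2 * max 1 ‖x‖) ^ i := by
  set T : E →L[ℝ] E →L[ℝ] ℝ := (2 : ℝ) • innerSL ℝ with hT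
  have hTx : ∀ y : E, ‖T y‖ ≤ 2 * ‖y‖ := by
    intro y
    have : T y = (2 : ℝ) • (innerSL ℝ y) := rfl
    rw [this, norm_smul (2:ℝ) ((innerSL ℝ) y), Real.norm_ofNat, innerSL_apply_norm]
  have hTnorm : ‖T‖ ≤ 2 := T.opNorm_le_bound (by norm_num) hTx
  have hfd : fderiv ℝ (fun y : E => ‖y‖ ^ 2) = fun y => T y := by
    funext y
    have := (hasStrictFDerivAt_norm_sq (F := E) y).hasFDerivAt.fderiv
    rw [this, hT]
    simp only [ContinuousLinearMap.smul_apply]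
    rw [← Nat.cast_smul_eq_nsmul ℝ 2]
    norm_num
  have hD : (0:ℝ) < 2 * max 1 ‖x‖ := by positivity
  match i, hi with
  | 1, _ =>
    conv_lhs => rw [show (1:ℕ) = 0 + 1 from rfl, ← norm_iteratedFDeriv_fderiv,
      norm_iteratedFDeriv_zero, hfd]
    calc ‖T x‖ ≤ 2 * ‖x‖ := hTx x
      _ ≤ (2 * max 1 ‖x‖) ^ (0 + 1) := by
          rw [pow_one]
          gcongr
          exact le_max_right _ _
  | 2, _ =>
    rw [show (2:ℕ) = 1 + 1 from rfl, ← norm_iteratedFDeriv_fderiv, hfd]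
    conv_lhs => rw [show (1:ℕ) = 0 + 1 from rfl, ← norm_iteratedFDeriv_fderiv,
      norm_iteratedFDeriv_zero]
    have : fderiv ℝ (fun y : E => T y) x = T := ContinuousLinearMap.fderiv T
    rw [this]
    calc ‖T‖ ≤ 2 := hTnorm
      _ ≤ (2 * max 1 ‖x‖) ^ (0 + 1 + 1) := by
          have h1 : (1:ℝ) ≤ max 1 ‖x‖ := le_max_left _ _
          calc (2:ℝ) ≤ 2 * max 1 ‖x‖ := by nlinarith
            _ ≤ (2 * max 1 ‖x‖) ^ (0 + 1 + 1) := le_self_pow₀ (by nlinarith) (by omega)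
  | (k + 3), _ =>
    have h1 : ‖iteratedFDeriv ℝ (k + 3) (fun y : E => ‖y‖ ^ 2) x‖
        = ‖iteratedFDeriv ℝ (k + 1) (fderiv ℝ (fun y : E => T y)) x‖ := by
      rw [show k + 3 = (k + 2) + 1 from rfl, ← norm_iteratedFDeriv_fderiv, hfd,
        show k + 2 = (k + 1) + 1 from rfl, ← norm_iteratedFDeriv_fderiv]
    have h2 : fderiv ℝ (fun y : E => T y) = fun _ : E => T := by
      funext y; exact ContinuousLinearMap.fderiv T
    rw [h1, h2, iteratedFDeriv_const_of_ne (by omega) T]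
    simp only [Pi.zero_apply, norm_zero]
    positivity

end Q

section L

set_option maxHeartbeats 1000000
set_option synthInstance.maxHeartbeats 400000

variable {E : Type} [NormedAddCommGroup E] [InnerProductSpace ℝ E]

lemma aux_L_bound (n : ℕ) {x : E} (hx : x ≠ 0) :
    ‖iteratedFDerivWithin ℝ n (fun y : E => ((Real.log (‖y‖ ^ 2) : ℝ) : ℂ))
        ({0}ᶜ : Set E) x‖ ≤
      (n ! : ℝ) * ((n ! : ℝ) * (|Real.log (‖x‖ ^ 2)| + max 1 (‖x‖⁻¹ ^ 2) ^ n)) *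
        (2 * max 1 ‖x‖) ^ n := by
  have hso : IsOpen ({0}ᶜ : Set E) := isOpen_compl_singleton
  have hsu : UniqueDiffOn ℝ ({0}ᶜ : Set E) := hso.uniqueDiffOn
  have hxs : x ∈ ({0}ᶜ : Set E) := hx
  have hqx : (0:ℝ) < ‖x‖ ^ 2 := pow_pos (norm_pos_iff.mpr hx) 2
  have hq0 : (‖x‖ ^ 2 : ℝ) ∈ ({0}ᶜ : Set ℝ) := by
    simp only [mem_compl_iff, mem_singleton_iff]
    exact hqx.ne'
  have hqcd : ContDiff ℝ ∞ (fun y : E => ‖y‖ ^ 2) := contDiff_norm_sq ℝ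
  have hmaps : MapsTo (fun y : E => ‖y‖ ^ 2) ({0}ᶜ : Set E) ({0}ᶜ : Set ℝ) := by
    intro y hy
    simp only [mem_compl_iff, mem_singleton_iff] at hy ⊢
    exact (pow_pos (norm_pos_iff.mpr hy) 2).ne'
  have hcomp : ContDiffOn ℝ ∞ (Real.log ∘ fun y : E => ‖y‖ ^ 2) ({0}ᶜ : Set E) :=
    Real.contDiffOn_log.comp hqcd.contDiffOn hmaps
  have hLeq : (fun y : E => ((Real.log (‖y‖ ^ 2) : ℝ) : ℂ)) =
      (RCLike.ofRealLI (K := ℂ)) ∘ (Real.log ∘ fun y : E => ‖y‖ ^ 2) := rfl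
  rw [hLeq, LinearIsometry.norm_iteratedFDerivWithin_comp_left _ (hcomp x hxs) hsu hxs (by exact_mod_cast le_top)]
  refine norm_iteratedFDerivWithin_comp_le Real.contDiffOn_log hqcd.contDiffOn (by exact_mod_cast le_top)
    isOpen_compl_singleton.uniqueDiffOn hsu hmaps hxs ?_ ?_
  · intro i hi
    rw [iteratedFDerivWithin_of_isOpen i isOpen_compl_singleton hq0]
    rcases Nat.eq_zero_or_pos i with rfl | hipos
    · rw [norm_iteratedFDeriv_zero]
      have h1 : (1:ℝ) ≤ (n ! : ℝ) := by exact_mod_cast Nat.one_le_iff_ne_zero.2 n.factorial_ne_zero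
      have h2 : (0:ℝ) ≤ max 1 (‖x‖⁻¹ ^ 2) ^ n := by positivity
      calc ‖Real.log (‖x‖ ^ 2)‖ = |Real.log (‖x‖ ^ 2)| := rfl
        _ ≤ |Real.log (‖x‖ ^ 2)| + max 1 (‖x‖⁻¹ ^ 2) ^ n := by linarith
        _ ≤ (n ! : ℝ) * (|Real.log (‖x‖ ^ 2)| + max 1 (‖x‖⁻¹ ^ 2) ^ n) := by
            nlinarith [abs_nonneg (Real.log (‖x‖ ^ 2))]
    · have hb := aux_norm_iteratedFDeriv_log hipos (ne_of_gt hqx)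
      refine hb.trans ?_
      have habs : |(‖x‖ ^ 2 : ℝ)|⁻¹ = ‖x‖⁻¹ ^ 2 := by
        rw [abs_of_pos hqx, ← inv_pow]
      rw [habs]
      have h1 : (i ! : ℝ) ≤ (n ! : ℝ) := by exact_mod_cast Nat.factorial_le hi
      have h2 : (‖x‖⁻¹ ^ 2) ^ i ≤ max 1 (‖x‖⁻¹ ^ 2) ^ n := by
        calc (‖x‖⁻¹ ^ 2) ^ i ≤ max 1 (‖x‖⁻¹ ^ 2) ^ i :=
              pow_le_pow_left₀ (by positivity) (le_max_right _ _) i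
          _ ≤ max 1 (‖x‖⁻¹ ^ 2) ^ n := pow_le_pow_right₀ (le_max_left _ _) hi
      have h3 : (0:ℝ) ≤ |Real.log (‖x‖ ^ 2)| := abs_nonneg _
      have h4 : (0:ℝ) ≤ (‖x‖⁻¹ ^ 2) ^ i := by positivity
      have h5 : (0:ℝ) < (i ! : ℝ) := by exact_mod_cast i.factorial_pos
      nlinarith
  · intro i hi1 hin
    rw [iteratedFDerivWithin_of_isOpen i isOpen_compl_singleton hxs]
    exact aux_norm_iteratedFDeriv_norm_sq x hi1


lemma aux_L_small (n : ℕ) {x : E} (hx : 0 < ‖x‖) (hx1 : ‖x‖ ≤ 1) :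
    ‖iteratedFDerivWithin ℝ n (fun y : E => ((Real.log (‖y‖ ^ 2) : ℝ) : ℂ))
        ({0}ᶜ : Set E) x‖ ≤
      (2 * (n ! : ℝ) ^ 2 * 2 ^ n) * (‖x‖⁻¹) ^ (2 * n + 2) := by
  have hx0 : x ≠ 0 := by simpa [norm_pos_iff] using hx
  have hinv1 : (1:ℝ) ≤ ‖x‖⁻¹ := by
    rw [one_le_inv_iff₀]; exact ⟨hx, hx1⟩
  have hinv2 : (1:ℝ) ≤ ‖x‖⁻¹ ^ 2 := one_le_pow₀ hinv1
  have hmax1 : max 1 ‖x‖ = 1 := max_eq_left hx1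
  have hmax2 : max 1 (‖x‖⁻¹ ^ 2) = ‖x‖⁻¹ ^ 2 := max_eq_right hinv2
  have hlog : |Real.log (‖x‖ ^ 2)| ≤ (‖x‖⁻¹ ^ 2) := by
    have ht : (0:ℝ) < ‖x‖ ^ 2 := pow_pos hx 2
    have ht1 : ‖x‖ ^ 2 ≤ 1 := pow_le_one₀ hx.le hx1
    have hneg : Real.log (‖x‖ ^ 2) ≤ 0 := Real.log_nonpos ht.le ht1
    rw [abs_of_nonpos hneg, ← Real.log_inv]
    have := Real.log_le_sub_one_of_pos (x := (‖x‖ ^ 2)⁻¹) (by positivity)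
    rw [← inv_pow]
    rw [← inv_pow] at this
    linarith
  refine (aux_L_bound n hx0).trans ?_
  rw [hmax1, hmax2]
  have hS : |Real.log (‖x‖ ^ 2)| + (‖x‖⁻¹ ^ 2) ^ n ≤ 2 * ‖x‖⁻¹ ^ (2 * n + 2) := by
    have t1 : |Real.log (‖x‖ ^ 2)| ≤ ‖x‖⁻¹ ^ (2 * n + 2) :=
      hlog.trans (pow_le_pow_right₀ hinv1 (by omega))
    have t2 : (‖x‖⁻¹ ^ 2) ^ n ≤ ‖x‖⁻¹ ^ (2 * n + 2) := by
      rw [← pow_mul]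
      exact pow_le_pow_right₀ hinv1 (by omega)
    linarith
  calc (n ! : ℝ) * ((n ! : ℝ) * (|Real.log (‖x‖ ^ 2)| + (‖x‖⁻¹ ^ 2) ^ n)) * (2 * 1) ^ n
      = (n ! : ℝ) ^ 2 * 2 ^ n * (|Real.log (‖x‖ ^ 2)| + (‖x‖⁻¹ ^ 2) ^ n) := by
        rw [mul_one]; ring
    _ ≤ (n ! : ℝ) ^ 2 * 2 ^ n * (2 * ‖x‖⁻¹ ^ (2 * n + 2)) := by
        have : (0:ℝ) ≤ (n ! : ℝ) ^ 2 * 2 ^ n := by positivity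
        exact mul_le_mul_of_nonneg_left hS this
    _ = (2 * (n ! : ℝ) ^ 2 * 2 ^ n) * (‖x‖⁻¹) ^ (2 * n + 2) := by ring

lemma aux_L_big (n : ℕ) {x : E} (hx1 : 1 ≤ ‖x‖) :
    ‖iteratedFDerivWithin ℝ n (fun y : E => ((Real.log (‖y‖ ^ 2) : ℝ) : ℂ))
        ({0}ᶜ : Set E) x‖ ≤
      (2 * (n ! : ℝ) ^ 2 * 2 ^ n) * ‖x‖ ^ (n + 2) := by
  have hx : (0:ℝ) < ‖x‖ := lt_of_lt_of_le one_pos hx1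
  have hx0 : x ≠ 0 := by simpa [norm_pos_iff] using hx
  have hinv : ‖x‖⁻¹ ≤ 1 := inv_le_one_of_one_le₀ hx1
  have hinv2 : ‖x‖⁻¹ ^ 2 ≤ 1 := pow_le_one₀ (by positivity) hinv
  have hmax1 : max 1 ‖x‖ = ‖x‖ := max_eq_right hx1
  have hmax2 : max 1 (‖x‖⁻¹ ^ 2) = 1 := max_eq_left hinv2
  have hlog : |Real.log (‖x‖ ^ 2)| ≤ ‖x‖ ^ 2 := by
    have ht1 : (1:ℝ) ≤ ‖x‖ ^ 2 := one_le_pow₀ hx1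
    rw [abs_of_nonneg (Real.log_nonneg ht1)]
    have := Real.log_le_sub_one_of_pos (x := ‖x‖ ^ 2) (by positivity)
    linarith
  refine (aux_L_bound n hx0).trans ?_
  rw [hmax1, hmax2, one_pow]
  have hS : |Real.log (‖x‖ ^ 2)| + 1 ≤ 2 * ‖x‖ ^ 2 := by
    have ht1 : (1:ℝ) ≤ ‖x‖ ^ 2 := one_le_pow₀ hx1
    linarith
  calc (n ! : ℝ) * ((n ! : ℝ) * (|Real.log (‖x‖ ^ 2)| + 1)) * (2 * ‖x‖) ^ n
      = (n ! : ℝ) ^ 2 * (2 ^ n * ‖x‖ ^ n) * (|Real.log (‖x‖ ^ 2)| + 1) := by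
        rw [mul_pow]; ring
    _ ≤ (n ! : ℝ) ^ 2 * (2 ^ n * ‖x‖ ^ n) * (2 * ‖x‖ ^ 2) := by
        have : (0:ℝ) ≤ (n ! : ℝ) ^ 2 * (2 ^ n * ‖x‖ ^ n) := by positivity
        exact mul_le_mul_of_nonneg_left hS this
    _ = (2 * (n ! : ℝ) ^ 2 * 2 ^ n) * ‖x‖ ^ (n + 2) := by
        rw [pow_add]; ring

end L


lemma aux_schwartz_vanish_bound {E : Type} [NormedAddCommGroup E] [NormedSpace ℝ E]
    (ψ : SchwartzMap E ℂ) (hψ : ∀ n : ℕ, iteratedFDeriv ℝ n (⇑ψ) 0 = 0) (k : ℕ) :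
    ∀ n : ℕ, ∃ C : ℝ, 0 ≤ C ∧
      ∀ x : E, ‖x‖ ≤ 1 → ‖iteratedFDeriv ℝ n (⇑ψ) x‖ ≤ C * ‖x‖ ^ k := by
  induction k with
  | zero =>
    intro n
    obtain ⟨C, hCpos, hC⟩ := ψ.decay 0 n
    refine ⟨C, hCpos.le, fun x _ => ?_⟩
    simpa using hC x
  | succ k ih =>
    intro n
    obtain ⟨C, hC0, hC⟩ := ih (n + 1)
    refine ⟨C, hC0, fun x hx1 => ?_⟩
    have hdiff : ∀ y : E, DifferentiableAt ℝ (iteratedFDeriv ℝ n ⇑ψ) y := by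
      intro y
      exact (ψ.smooth'.differentiable_iteratedFDeriv
        (by
          rw [show ((n : WithTop ℕ∞)) = (((n : ℕ∞)) : WithTop ℕ∞) by norm_cast]
          exact WithTop.coe_lt_coe.2 (by simp [lt_top_iff_ne_top]))) y
    have hbound : ∀ y ∈ Metric.closedBall (0 : E) ‖x‖,
        ‖fderiv ℝ (iteratedFDeriv ℝ n ⇑ψ) y‖ ≤ C * ‖x‖ ^ k := by
      intro y hy
      rw [Metric.mem_closedBall, dist_zero_right] at hy
      rw [norm_fderiv_iteratedFDeriv]
      refine (hC y (hy.trans hx1)).trans ?_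
      exact mul_le_mul_of_nonneg_left (pow_le_pow_left₀ (norm_nonneg y) hy k) hC0
    have hmvt := (convex_closedBall (0 : E) ‖x‖).norm_image_sub_le_of_norm_fderiv_le
      (fun y _ => hdiff y) hbound
      (Metric.mem_closedBall_self (norm_nonneg x))
      (by rw [Metric.mem_closedBall, dist_zero_right])
    rw [hψ n, sub_zero, sub_zero] at hmvt
    calc ‖iteratedFDeriv ℝ n (⇑ψ) x‖ ≤ C * ‖x‖ ^ k * ‖x‖ := hmvt
      _ = C * ‖x‖ ^ (k + 1) := by rw [pow_succ]; ring

section Main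

set_option maxHeartbeats 2000000
set_option synthInstance.maxHeartbeats 400000

/-- Let `ψ` be a Schwartz function on `ℝ^d` with all derivatives vanishing at the
origin. Then `ξ ↦ log(‖ξ‖²) ψ(ξ)` (extended by `0` at `ξ = 0`) is again a Schwartz
function with all derivatives vanishing at the origin. -/
theorem log_symbol_mul_preserves_Psi (d : ℕ)
    (ψ : SchwartzMap (EuclideanSpace ℝ (Fin d)) ℂ)
    (hψ : ∀ n : ℕ, iteratedFDeriv ℝ n (⇑ψ) 0 = 0) :
    ∃ g : SchwartzMap (EuclideanSpace ℝ (Fin d)) ℂ,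
      (∀ ξ : EuclideanSpace ℝ (Fin d), ξ ≠ 0 →
        g ξ = (Real.log (‖ξ‖ ^ 2) : ℂ) * ψ ξ) ∧
      g 0 = 0 ∧
      (∀ n : ℕ, iteratedFDeriv ℝ n (⇑g) 0 = 0) := by
  classical
  set s : Set (EuclideanSpace ℝ (Fin d)) := {0}ᶜ with hs
  have hso : IsOpen s := isOpen_compl_singleton
  have hsu : UniqueDiffOn ℝ s := hso.uniqueDiffOn
  set L : EuclideanSpace ℝ (Fin d) → ℂ :=
    fun ξ => ((Real.log (‖ξ‖ ^ 2) : ℝ) : ℂ) with hL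
  set f : EuclideanSpace ℝ (Fin d) → ℂ := fun ξ => L ξ * ψ ξ with hf
  have hψ0 : ψ 0 = 0 := by
    have h := hψ 0
    have h2 := congrArg (fun T => T (fun _ : Fin 0 => (0 : EuclideanSpace ℝ (Fin d)))) h
    simpa [iteratedFDeriv_zero_apply] using h2
  have hf0 : f 0 = 0 := by simp [hf, hψ0]
  have hmaps : MapsTo (fun y : EuclideanSpace ℝ (Fin d) => ‖y‖ ^ 2) s ({0}ᶜ : Set ℝ) := by
    intro y hy
    simp only [hs, mem_compl_iff, mem_singleton_iff] at hy ⊢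
    exact (pow_pos (norm_pos_iff.mpr hy) 2).ne'
  have hLsm : ContDiffOn ℝ ∞ L s := by
    have : ContDiffOn ℝ ∞ (⇑Complex.ofRealCLM ∘
        (Real.log ∘ fun y : EuclideanSpace ℝ (Fin d) => ‖y‖ ^ 2)) s :=
      Complex.ofRealCLM.contDiff.comp_contDiffOn
        (Real.contDiffOn_log.comp (contDiff_norm_sq ℝ).contDiffOn hmaps)
    exact this
  have hfsm : ContDiffOn ℝ ∞ f s := hLsm.mul ψ.smooth'.contDiffOn
  -- near-zero bounds on all derivatives of f, with arbitrary vanishing order N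
  have HF : ∀ n N : ℕ, ∃ C : ℝ, ∀ x : EuclideanSpace ℝ (Fin d), 0 < ‖x‖ → ‖x‖ ≤ 1 →
      ‖iteratedFDerivWithin ℝ n f s x‖ ≤ C * ‖x‖ ^ N := by
    intro n N
    choose D hD0 hD using aux_schwartz_vanish_bound ψ hψ (N + (2 * n + 2))
    refine ⟨∑ i ∈ Finset.range (n + 1),
      (n.choose i : ℝ) * (2 * (i ! : ℝ) ^ 2 * 2 ^ i) * D (n - i), fun x hx hx1 => ?_⟩
    have hxne : ‖x‖ ≠ 0 := hx.ne'
    have hxs : x ∈ s := by simpa [hs, norm_pos_iff] using hx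
    have hinv1 : (1:ℝ) ≤ ‖x‖⁻¹ := by rw [one_le_inv_iff₀]; exact ⟨hx, hx1⟩
    have hmul := norm_iteratedFDerivWithin_mul_le (𝕜 := ℝ) hLsm ψ.smooth'.contDiffOn hsu hxs
      (n := n) (by exact_mod_cast le_top)
    refine hmul.trans ?_
    rw [Finset.sum_mul]
    refine Finset.sum_le_sum ?_
    intro i hi
    rw [Finset.mem_range] at hi
    have h1 : ‖iteratedFDerivWithin ℝ i L s x‖ ≤
        (2 * (i ! : ℝ) ^ 2 * 2 ^ i) * ‖x‖⁻¹ ^ (2 * n + 2) := by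
      refine (aux_L_small i hx hx1).trans ?_
      exact mul_le_mul_of_nonneg_left (pow_le_pow_right₀ hinv1 (by omega)) (by positivity)
    have h2 : ‖iteratedFDerivWithin ℝ (n - i) (⇑ψ) s x‖ ≤
        D (n - i) * ‖x‖ ^ (N + (2 * n + 2)) := by
      rw [iteratedFDerivWithin_of_isOpen _ hso hxs]
      exact hD (n - i) x hx1
    have key : ‖x‖⁻¹ ^ (2 * n + 2) * ‖x‖ ^ (N + (2 * n + 2)) = ‖x‖ ^ N := by
      calc ‖x‖⁻¹ ^ (2 * n + 2) * ‖x‖ ^ (N + (2 * n + 2))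
          = (‖x‖ ^ (2 * n + 2))⁻¹ * (‖x‖ ^ (2 * n + 2) * ‖x‖ ^ N) := by
            rw [inv_pow, show N + (2 * n + 2) = (2 * n + 2) + N by omega, pow_add ‖x‖ (2 * n + 2) N]
        _ = ‖x‖ ^ N := inv_mul_cancel_left₀ (pow_ne_zero _ hxne) _
    calc (n.choose i : ℝ) * ‖iteratedFDerivWithin ℝ i L s x‖ *
          ‖iteratedFDerivWithin ℝ (n - i) (⇑ψ) s x‖
        ≤ (n.choose i : ℝ) * ((2 * (i ! : ℝ) ^ 2 * 2 ^ i) * ‖x‖⁻¹ ^ (2 * n + 2)) *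
          (D (n - i) * ‖x‖ ^ (N + (2 * n + 2))) := by
          refine mul_le_mul ?_ h2 (norm_nonneg _) (by positivity)
          exact mul_le_mul_of_nonneg_left h1 (by positivity)
      _ = (n.choose i : ℝ) * (2 * (i ! : ℝ) ^ 2 * 2 ^ i) * D (n - i) *
          (‖x‖⁻¹ ^ (2 * n + 2) * ‖x‖ ^ (N + (2 * n + 2))) := by ring
      _ = (n.choose i : ℝ) * (2 * (i ! : ℝ) ^ 2 * 2 ^ i) * D (n - i) * ‖x‖ ^ N := by
          rw [key]
  have hvan : ∀ n : ℕ, iteratedFDeriv ℝ n f 0 = 0 := fun n =>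
    (ext_across_zero n f hf0 hfsm (fun m => HF m 2)).2 n le_rfl
  have hsmooth : ContDiff ℝ ∞ f := contDiff_infty.2 fun m =>
    (ext_across_zero m f hf0 hfsm (fun m' => HF m' 2)).1
  -- Schwartz decay
  have hdecay : ∀ k n : ℕ, ∃ C : ℝ, ∀ x : EuclideanSpace ℝ (Fin d),
      ‖x‖ ^ k * ‖iteratedFDeriv ℝ n f x‖ ≤ C := by
    intro k n
    obtain ⟨C₁, hC₁⟩ := HF n 0
    choose P hP0 hP using fun m => ψ.decay (k + n + 2) m
    set C₂ : ℝ := ∑ i ∈ Finset.range (n + 1),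
      (n.choose i : ℝ) * (2 * (i ! : ℝ) ^ 2 * 2 ^ i) * P (n - i) with hC₂
    refine ⟨max (max C₁ C₂) 0, fun x => ?_⟩
    rcases eq_or_ne x 0 with rfl | hx0
    · simp [hvan n]
    have hxs : x ∈ s := hx0
    have hxpos : (0:ℝ) < ‖x‖ := norm_pos_iff.mpr hx0
    have hglob : iteratedFDeriv ℝ n f x = iteratedFDerivWithin ℝ n f s x :=
      (iteratedFDerivWithin_of_isOpen n hso hxs).symm
    rcases le_or_gt ‖x‖ 1 with hle | hgt
    · have hb := hC₁ x hxpos hle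
      rw [pow_zero, mul_one] at hb
      have hC₁0 : (0:ℝ) ≤ C₁ := le_trans (norm_nonneg _) hb
      have hxk : ‖x‖ ^ k ≤ 1 := pow_le_one₀ hxpos.le hle
      calc ‖x‖ ^ k * ‖iteratedFDeriv ℝ n f x‖
          ≤ 1 * C₁ := by
            rw [hglob]
            exact mul_le_mul hxk hb (norm_nonneg _) zero_le_one
        _ = C₁ := one_mul _
        _ ≤ max (max C₁ C₂) 0 := le_max_of_le_left (le_max_left _ _)
    · have hx1 : (1:ℝ) ≤ ‖x‖ := hgt.le
      have hmul := norm_iteratedFDerivWithin_mul_le (𝕜 := ℝ) hLsm ψ.smooth'.contDiffOn hsu hxs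
        (n := n) (by exact_mod_cast le_top)
      have step : ‖x‖ ^ k * ‖iteratedFDerivWithin ℝ n f s x‖ ≤ C₂ := by
        refine le_trans (mul_le_mul_of_nonneg_left hmul (by positivity)) ?_
        rw [Finset.mul_sum, hC₂]
        refine Finset.sum_le_sum ?_
        intro i hi
        rw [Finset.mem_range] at hi
        have e1 : ‖iteratedFDerivWithin ℝ i L s x‖ ≤
            (2 * (i ! : ℝ) ^ 2 * 2 ^ i) * ‖x‖ ^ (n + 2) := by
          refine (aux_L_big i hx1).trans ?_
          exact mul_le_mul_of_nonneg_left (pow_le_pow_right₀ hx1 (by omega)) (by positivity)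
        have hping : iteratedFDerivWithin ℝ (n - i) (⇑ψ) s x
            = iteratedFDeriv ℝ (n - i) (⇑ψ) x := iteratedFDerivWithin_of_isOpen _ hso hxs
        have e2 : ‖x‖ ^ (k + n + 2) * ‖iteratedFDeriv ℝ (n - i) (⇑ψ) x‖ ≤ P (n - i) :=
          hP (n - i) x
        calc ‖x‖ ^ k * ((n.choose i : ℝ) * ‖iteratedFDerivWithin ℝ i L s x‖ *
              ‖iteratedFDerivWithin ℝ (n - i) (⇑ψ) s x‖)
            ≤ ‖x‖ ^ k * ((n.choose i : ℝ) *
                ((2 * (i ! : ℝ) ^ 2 * 2 ^ i) * ‖x‖ ^ (n + 2)) *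
                ‖iteratedFDerivWithin ℝ (n - i) (⇑ψ) s x‖) := by
              refine mul_le_mul_of_nonneg_left ?_ (by positivity)
              exact mul_le_mul_of_nonneg_right
                (mul_le_mul_of_nonneg_left e1 (by positivity)) (norm_nonneg _)
          _ = (n.choose i : ℝ) * (2 * (i ! : ℝ) ^ 2 * 2 ^ i) *
                (‖x‖ ^ (k + n + 2) * ‖iteratedFDeriv ℝ (n - i) (⇑ψ) x‖) := by
              rw [hping, show k + n + 2 = k + (n + 2) by omega, pow_add]
              ring
          _ ≤ (n.choose i : ℝ) * (2 * (i ! : ℝ) ^ 2 * 2 ^ i) * P (n - i) :=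
              mul_le_mul_of_nonneg_left e2 (by positivity)
      calc ‖x‖ ^ k * ‖iteratedFDeriv ℝ n f x‖
          = ‖x‖ ^ k * ‖iteratedFDerivWithin ℝ n f s x‖ := by rw [hglob]
        _ ≤ C₂ := step
        _ ≤ max (max C₁ C₂) 0 := le_max_of_le_left (le_max_right _ _)
  refine ⟨⟨f, hsmooth, hdecay⟩, ?_, ?_, ?_⟩
  · intro ξ hξ
    rfl
  · exact hf0
  · exact hvan

end Main
end

section
/- In dimension d = 2, for every x ∈ ℝ² with |x| > 0, the integral ∫_2^∞ r J_0(r|x|)/(r² - 1) dr converges, and there is a constant C > 0 such that |∫_2^∞ r J_0(r|x|)/(r² - 1) dr| ≤ C |x|^{-1/2} for all |x| ≥ 2. -/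
open Real MeasureTheory intervalIntegral Set

/-- The Bessel function of the first kind of integer order `n`, via Bessel's
integral representation `J_n(s) = (1/π) ∫_0^π cos(nθ - s sin θ) dθ`. -/
noncomputable def besselJ (n : ℕ) (s : ℝ) : ℝ :=
  (1 / Real.pi) * ∫ θ in (0:ℝ)..Real.pi, Real.cos (n * θ - s * Real.sin θ)

lemma besselJ0_eq (s : ℝ) :
    besselJ 0 s = (1 / π) * ∫ θ in (0:ℝ)..π, Real.cos (s * Real.sin θ) := by
  unfold besselJ
  congr 1
  apply intervalIntegral.integral_congr
  intro θ _
  norm_num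

lemma osc_left {s δ : ℝ} (hs : 0 < s) (hδ : 0 < δ) (hδ' : δ ≤ π/2) :
    |∫ θ in (0:ℝ)..(π/2 - δ), Real.cos (s * Real.sin θ)| ≤ 2 / (s * Real.sin δ) := by
  set b : ℝ := π/2 - δ with hb
  have hb0 : 0 ≤ b := by have := pi_pos; simp only [hb]; linarith
  have hsd : 0 < Real.sin δ := Real.sin_pos_of_pos_of_lt_pi hδ (by have := pi_pos; linarith)
  have hcos : ∀ θ ∈ uIcc (0:ℝ) b, Real.sin δ ≤ Real.cos θ := by
    intro θ hθ
    rw [uIcc_of_le hb0] at hθ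
    have h1 : Real.cos b = Real.sin δ := by rw [hb, Real.cos_pi_div_two_sub]
    rw [← h1]
    apply Real.cos_le_cos_of_nonneg_of_le_pi hθ.1 (by have := pi_pos; simp only [hb]; linarith) hθ.2
  have hcospos : ∀ θ ∈ uIcc (0:ℝ) b, 0 < Real.cos θ := fun θ hθ => lt_of_lt_of_le hsd (hcos θ hθ)
  set u : ℝ → ℝ := fun θ => (s * Real.cos θ)⁻¹ with hu
  set u' : ℝ → ℝ := fun θ => s * Real.sin θ / (s * Real.cos θ)^2 with hu'
  set v : ℝ → ℝ := fun θ => Real.sin (s * Real.sin θ) with hv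
  set v' : ℝ → ℝ := fun θ => Real.cos (s * Real.sin θ) * (s * Real.cos θ) with hv'
  have hud : ∀ θ ∈ uIcc (0:ℝ) b, HasDerivAt u (u' θ) θ := by
    intro θ hθ
    have h1 : HasDerivAt (fun θ => s * Real.cos θ) (s * (-Real.sin θ)) θ :=
      (Real.hasDerivAt_cos θ).const_mul s
    have h2 := h1.inv (mul_pos hs (hcospos θ hθ)).ne'
    refine h2.congr_deriv ?_
    show _ = s * Real.sin θ / (s * Real.cos θ)^2
    ring
  have hvd : ∀ θ : ℝ, HasDerivAt v (v' θ) θ := by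
    intro θ
    have h1 : HasDerivAt (fun θ => s * Real.sin θ) (s * Real.cos θ) θ :=
      (Real.hasDerivAt_sin θ).const_mul s
    exact (Real.hasDerivAt_sin (s * Real.sin θ)).comp θ h1
  have hucont : ContinuousOn u (uIcc (0:ℝ) b) := by
    apply ContinuousOn.inv₀ (by fun_prop)
    intro θ hθ; exact (mul_pos hs (hcospos θ hθ)).ne'
  have hu'cont : ContinuousOn u' (uIcc (0:ℝ) b) := by
    apply ContinuousOn.div (by fun_prop) (by fun_prop)
    intro θ hθ; exact pow_ne_zero 2 (mul_pos hs (hcospos θ hθ)).ne'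
  have hu'int : IntervalIntegrable u' volume 0 b := hu'cont.intervalIntegrable
  have hv'int : IntervalIntegrable v' volume 0 b :=
    (by fun_prop : Continuous v').intervalIntegrable _ _
  have hIoo : Ioo (min (0:ℝ) b) (max 0 b) ⊆ uIcc (0:ℝ) b := Ioo_subset_Icc_self
  have key : ∫ θ in (0:ℝ)..b, u θ * v' θ = u b * v b - u 0 * v 0 - ∫ θ in (0:ℝ)..b, u' θ * v θ :=
    integral_mul_deriv_eq_deriv_mul_of_hasDerivAt hucont (by fun_prop)
      (fun θ hθ => hud θ (hIoo hθ)) (fun θ _ => hvd θ) hu'int hv'int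
  have heq : ∫ θ in (0:ℝ)..b, Real.cos (s * Real.sin θ) = ∫ θ in (0:ℝ)..b, u θ * v' θ := by
    apply intervalIntegral.integral_congr
    intro θ hθ
    have := (mul_pos hs (hcospos θ hθ)).ne'
    simp only [hu, hv']
    field_simp
    rw [mul_div_assoc, div_self (hcospos θ hθ).ne', mul_one]
  -- bound the u' v integral
  have hu'nonneg : ∀ θ ∈ uIcc (0:ℝ) b, 0 ≤ u' θ := by
    intro θ hθ
    rw [uIcc_of_le hb0] at hθ
    have h : θ ∈ Icc 0 b := hθ
    have hsin : 0 ≤ Real.sin θ := Real.sin_nonneg_of_nonneg_of_le_pi h.1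
      (h.2.trans (by rw [hb]; have := pi_pos; linarith))
    simp only [hu']
    positivity
  have hftc : ∫ θ in (0:ℝ)..b, u' θ = u b - u 0 :=
    intervalIntegral.integral_eq_sub_of_hasDerivAt
      (fun θ hθ => hud θ (by rwa [uIcc_of_le hb0] at hθ ⊢)) hu'int
  have hub : u b = (s * Real.sin δ)⁻¹ := by
    simp only [hu, hb, Real.cos_pi_div_two_sub]
  have hu0 : 0 ≤ u 0 := by simp only [hu, Real.cos_zero, mul_one]; positivity
  have hu0b : u 0 ≤ u b := by
    rw [hub]; simp only [hu, Real.cos_zero, mul_one]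
    apply inv_anti₀ (mul_pos hs hsd)
    nlinarith [Real.sin_le_one δ]
  have habs_sin : ∀ t : ℝ, |Real.sin t| ≤ 1 := fun t =>
    abs_le.2 ⟨Real.neg_one_le_sin t, Real.sin_le_one t⟩
  have habs1 : |∫ θ in (0:ℝ)..b, u' θ * v θ| ≤ (s * Real.sin δ)⁻¹ := by
    have h1 : ‖∫ θ in (0:ℝ)..b, u' θ * v θ‖ ≤ |∫ θ in (0:ℝ)..b, u' θ| := by
      apply intervalIntegral.norm_integral_le_abs_of_norm_le ?_ hu'int
      rw [Set.uIoc_of_le hb0]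
      filter_upwards [MeasureTheory.ae_restrict_mem measurableSet_Ioc] with θ hθ
      have hθ' : θ ∈ uIcc (0:ℝ) b := by
        rw [uIcc_of_le hb0]; exact Ioc_subset_Icc_self hθ
      rw [Real.norm_eq_abs, abs_mul]
      calc |u' θ| * |v θ| ≤ |u' θ| * 1 :=
            mul_le_mul_of_nonneg_left (by simpa [hv] using habs_sin (s * Real.sin θ)) (abs_nonneg _)
        _ = u' θ := by rw [mul_one, abs_of_nonneg (hu'nonneg θ hθ')]
    rw [Real.norm_eq_abs] at h1
    calc |∫ θ in (0:ℝ)..b, u' θ * v θ| ≤ |∫ θ in (0:ℝ)..b, u' θ| := h1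
      _ = |u b - u 0| := by rw [hftc]
      _ ≤ u b := abs_le.2 ⟨by linarith, by linarith⟩
      _ = (s * Real.sin δ)⁻¹ := hub
  -- final combination
  have hv0 : v 0 = 0 := by simp [hv]
  rw [heq, key, hv0, mul_zero, sub_zero]
  have hvb : |v b| ≤ 1 := habs_sin _
  have hubpos : 0 < u b := by rw [hub]; positivity
  calc |u b * v b - ∫ θ in (0:ℝ)..b, u' θ * v θ|
      ≤ |u b * v b| + |∫ θ in (0:ℝ)..b, u' θ * v θ| := abs_sub _ _
    _ ≤ (s * Real.sin δ)⁻¹ + (s * Real.sin δ)⁻¹ := by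
        apply add_le_add _ habs1
        rw [abs_mul, abs_of_pos hubpos, hub]
        nlinarith [abs_nonneg (v b), inv_pos.2 (mul_pos hs hsd)]
    _ = 2 / (s * Real.sin δ) := by ring

lemma osc_right {s δ : ℝ} (hs : 0 < s) (hδ : 0 < δ) (hδ' : δ ≤ π/2) :
    |∫ θ in (π/2 + δ)..π, Real.cos (s * Real.sin θ)| ≤ 2 / (s * Real.sin δ) := by
  have h := intervalIntegral.integral_comp_sub_left (a := (0:ℝ)) (b := π/2 - δ)
    (fun θ => Real.cos (s * Real.sin θ)) π
  have h2 : ∀ x : ℝ, Real.cos (s * Real.sin (π - x)) = Real.cos (s * Real.sin x) := by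
    intro x; rw [Real.sin_pi_sub]
  simp only [h2] at h
  have h3 : π - (π/2 - δ) = π/2 + δ := by ring
  have h4 : π - (0:ℝ) = π := by ring
  rw [h3, h4] at h
  rw [← h]
  exact osc_left hs hδ hδ'

lemma osc_total {s : ℝ} (hs : 1 ≤ s) :
    |∫ θ in (0:ℝ)..π, Real.cos (s * Real.sin θ)| ≤ (2*π + 2) * s ^ (-(1:ℝ)/2) := by
  have hs0 : 0 < s := lt_of_lt_of_le one_pos hs
  set δ : ℝ := s ^ (-(1:ℝ)/2) with hδdef
  have hδ0 : 0 < δ := Real.rpow_pos_of_pos hs0 _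
  have hδ1 : δ ≤ 1 := Real.rpow_le_one_of_one_le_of_nonpos hs (by norm_num)
  have hπ : (2:ℝ) ≤ π/2 * 2 := by nlinarith [pi_gt_three]
  have hδπ : δ ≤ π/2 := by nlinarith [pi_gt_three]
  have hcont : ∀ a b : ℝ, IntervalIntegrable (fun θ => Real.cos (s * Real.sin θ)) volume a b :=
    fun a b => (by fun_prop : Continuous fun θ => Real.cos (s * Real.sin θ)).intervalIntegrable a b
  have hsplit1 : (∫ θ in (0:ℝ)..(π/2-δ), Real.cos (s * Real.sin θ))
      + ∫ θ in (π/2-δ)..(π/2+δ), Real.cos (s * Real.sin θ)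
      = ∫ θ in (0:ℝ)..(π/2+δ), Real.cos (s * Real.sin θ) :=
    intervalIntegral.integral_add_adjacent_intervals (hcont _ _) (hcont _ _)
  have hsplit2 : (∫ θ in (0:ℝ)..(π/2+δ), Real.cos (s * Real.sin θ))
      + ∫ θ in (π/2+δ)..π, Real.cos (s * Real.sin θ)
      = ∫ θ in (0:ℝ)..π, Real.cos (s * Real.sin θ) :=
    intervalIntegral.integral_add_adjacent_intervals (hcont _ _) (hcont _ _)
  have hmid : |∫ θ in (π/2-δ)..(π/2+δ), Real.cos (s * Real.sin θ)| ≤ 2 * δ := by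
    have := intervalIntegral.norm_integral_le_of_norm_le_const (C := 1)
      (f := fun θ => Real.cos (s * Real.sin θ)) (a := π/2-δ) (b := π/2+δ)
      (fun θ _ => by rw [Real.norm_eq_abs]; exact Real.abs_cos_le_one _)
    rw [Real.norm_eq_abs] at this
    calc |∫ θ in (π/2-δ)..(π/2+δ), Real.cos (s * Real.sin θ)| ≤ 1 * |π/2+δ - (π/2-δ)| := this
      _ = 2 * δ := by rw [one_mul]; rw [abs_of_nonneg (by linarith)]; ring
  -- tail bound: 2/(s sin δ) ≤ π * δ  since sin δ ≥ (2/π) δ and s * δ² = 1... careful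
  have hsin : 2/π * δ ≤ Real.sin δ := Real.mul_le_sin hδ0.le hδπ
  have hsδ : s * δ * δ = 1 := by
    rw [hδdef, mul_assoc, ← Real.rpow_add hs0]
    norm_num
    rw [Real.rpow_neg_one]
    exact mul_inv_cancel₀ hs0.ne'
  have htail : 2 / (s * Real.sin δ) ≤ π * δ := by
    have h1 : 0 < s * Real.sin δ := mul_pos hs0 (lt_of_lt_of_le (by positivity) hsin)
    rw [div_le_iff₀ h1]
    have h2 : s * (2/π * δ) ≤ s * Real.sin δ := by
      apply mul_le_mul_of_nonneg_left hsin hs0.le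
    have hπ0 := pi_pos
    calc (2:ℝ) = π * δ * (s * (2/π * δ)) := by
          field_simp
          nlinarith [hsδ]
      _ ≤ π * δ * (s * Real.sin δ) := by
          apply mul_le_mul_of_nonneg_left h2 (by positivity)
  have hL := osc_left hs0 hδ0 hδπ
  have hR := osc_right hs0 hδ0 hδπ
  calc |∫ θ in (0:ℝ)..π, Real.cos (s * Real.sin θ)|
      = |((∫ θ in (0:ℝ)..(π/2-δ), Real.cos (s * Real.sin θ))
          + ∫ θ in (π/2-δ)..(π/2+δ), Real.cos (s * Real.sin θ))
          + ∫ θ in (π/2+δ)..π, Real.cos (s * Real.sin θ)| := by rw [hsplit1, hsplit2]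
    _ ≤ |(∫ θ in (0:ℝ)..(π/2-δ), Real.cos (s * Real.sin θ))
          + ∫ θ in (π/2-δ)..(π/2+δ), Real.cos (s * Real.sin θ)|
          + |∫ θ in (π/2+δ)..π, Real.cos (s * Real.sin θ)| := abs_add_le _ _
    _ ≤ |∫ θ in (0:ℝ)..(π/2-δ), Real.cos (s * Real.sin θ)|
          + |∫ θ in (π/2-δ)..(π/2+δ), Real.cos (s * Real.sin θ)|
          + |∫ θ in (π/2+δ)..π, Real.cos (s * Real.sin θ)| := by
            gcongr; exact abs_add_le _ _
    _ ≤ (π * δ) + 2 * δ + (π * δ) :=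
          add_le_add (add_le_add (hL.trans htail) hmid) (hR.trans htail)
    _ = (2*π + 2) * δ := by ring

lemma besselJ0_decay {s : ℝ} (hs : 1 ≤ s) : |besselJ 0 s| ≤ 3 * s ^ (-(1:ℝ)/2) := by
  have hπ := pi_gt_three
  have hδ : (0:ℝ) < s ^ (-(1:ℝ)/2) := Real.rpow_pos_of_pos (by linarith) _
  rw [besselJ0_eq, abs_mul, abs_of_pos (by positivity : (0:ℝ) < 1/π)]
  calc 1/π * |∫ θ in (0:ℝ)..π, Real.cos (s * Real.sin θ)|
      ≤ 1/π * ((2*π + 2) * s ^ (-(1:ℝ)/2)) :=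
        mul_le_mul_of_nonneg_left (osc_total hs) (by positivity)
    _ ≤ 3 * s ^ (-(1:ℝ)/2) := by
        rw [div_mul_eq_mul_div, one_mul, div_le_iff₀ (by linarith)]
        nlinarith
lemma besselJ0_cont : Continuous (besselJ 0) := by
  unfold besselJ
  apply Continuous.mul continuous_const
  exact intervalIntegral.continuous_parametric_intervalIntegral_of_continuous'
    (f := fun (s : ℝ) (θ : ℝ) => Real.cos ((0:ℕ) * θ - s * Real.sin θ)) (by fun_prop) 0 π

lemma Fbound {a r : ℝ} (ha : 0 < a) (hr : 2 ≤ r) (h1 : 1 ≤ r * a) :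
    |r * besselJ 0 (r * a) / (r ^ 2 - 1)| ≤ 4 * a ^ (-(1:ℝ)/2) * r ^ (-(3:ℝ)/2) := by
  have hr0 : (0:ℝ) < r := by linarith
  have hden : (0:ℝ) < r ^ 2 - 1 := by nlinarith
  have hJ := besselJ0_decay h1
  have hmulr : (r * a) ^ (-(1:ℝ)/2) = r ^ (-(1:ℝ)/2) * a ^ (-(1:ℝ)/2) :=
    Real.mul_rpow hr0.le ha.le
  have habs : |r * besselJ 0 (r * a) / (r ^ 2 - 1)|
      = |besselJ 0 (r * a)| * (r / (r ^ 2 - 1)) := by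
    rw [abs_div, abs_mul, abs_of_pos hr0, abs_of_pos hden]
    ring
  have hdiv : r / (r ^ 2 - 1) ≤ 4/3 * r ^ (-(1:ℝ)) := by
    rw [Real.rpow_neg_one]
    have h2 : 4/3 * r⁻¹ = 4 / (3 * r) := by field_simp
    rw [h2, div_le_div_iff₀ hden (by positivity)]
    nlinarith
  calc |r * besselJ 0 (r * a) / (r ^ 2 - 1)|
      = |besselJ 0 (r * a)| * (r / (r ^ 2 - 1)) := habs
    _ ≤ (3 * (r ^ (-(1:ℝ)/2) * a ^ (-(1:ℝ)/2))) * (4/3 * r ^ (-(1:ℝ))) := by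
        apply mul_le_mul (by rwa [hmulr] at hJ) hdiv (by positivity)
        positivity
    _ = 4 * a ^ (-(1:ℝ)/2) * (r ^ (-(1:ℝ)/2) * r ^ (-(1:ℝ))) := by ring
    _ = 4 * a ^ (-(1:ℝ)/2) * r ^ (-(3:ℝ)/2) := by
        rw [← Real.rpow_add hr0]
        norm_num

/-- In dimension 2: for every `x ≠ 0` the integral `∫_2^∞ r J_0(r‖x‖)/(r²-1) dr`
converges, and it is bounded by `C ‖x‖^{-1/2}` for `‖x‖ ≥ 2`. -/
theorem helmholtz_tail_integral_bound :
    (∀ x : EuclideanSpace ℝ (Fin 2), 0 < ‖x‖ →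
      MeasureTheory.IntegrableOn
        (fun r : ℝ => r * besselJ 0 (r * ‖x‖) / (r ^ 2 - 1)) (Set.Ioi 2)) ∧
    ∃ C : ℝ, 0 < C ∧ ∀ x : EuclideanSpace ℝ (Fin 2), 2 ≤ ‖x‖ →
      |∫ r in Set.Ioi (2:ℝ), r * besselJ 0 (r * ‖x‖) / (r ^ 2 - 1)|
        ≤ C * ‖x‖ ^ (-(1:ℝ)/2) := by
  -- generic integrability statement
  have hcontF : ∀ a : ℝ, ContinuousOn (fun r : ℝ => r * besselJ 0 (r * a) / (r ^ 2 - 1)) (Ici 2) := by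
    intro a
    apply ContinuousOn.div
    · exact (continuous_id.mul (besselJ0_cont.comp (continuous_id.mul continuous_const))).continuousOn
    · fun_prop
    · intro r hr
      simp only [mem_Ici] at hr
      nlinarith
  have hint : ∀ a : ℝ, 0 < a →
      IntegrableOn (fun r : ℝ => r * besselJ 0 (r * a) / (r ^ 2 - 1)) (Ioi 2) := by
    intro a ha
    set R : ℝ := max 2 (1/a) with hR
    have hR2 : (2:ℝ) ≤ R := le_max_left _ _
    have hRa : 1/a ≤ R := le_max_right _ _
    have hunion : Ioc 2 R ∪ Ioi R = Ioi 2 := Ioc_union_Ioi_eq_Ioi hR2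
    rw [← hunion]
    apply IntegrableOn.union
    · exact (((hcontF a).mono (Icc_subset_Ici_self)).integrableOn_Icc).mono_set Ioc_subset_Icc_self
    · apply Integrable.mono'
        (g := fun r : ℝ => 4 * a ^ (-(1:ℝ)/2) * r ^ (-(3:ℝ)/2))
      · exact ((integrableOn_Ioi_rpow_of_lt (by norm_num) (by linarith : (0:ℝ) < R)).const_mul _)
      · exact ((hcontF a).mono (fun r (hr : r ∈ Ioi R) => le_trans hR2 (le_of_lt hr))).aestronglyMeasurable measurableSet_Ioi
      · filter_upwards [MeasureTheory.ae_restrict_mem measurableSet_Ioi] with r hr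
        have hrR : R < r := hr
        have hr2 : 2 ≤ r := le_of_lt (lt_of_le_of_lt hR2 hrR)
        have h1 : 1 ≤ r * a := by
          have : 1/a < r := lt_of_le_of_lt hRa hrR
          rw [div_lt_iff₀ ha] at this
          linarith
        rw [Real.norm_eq_abs]
        exact Fbound ha hr2 h1
  constructor
  · exact fun x hx => hint ‖x‖ hx
  · refine ⟨8, by norm_num, ?_⟩
    intro x hx
    set a : ℝ := ‖x‖ with ha
    have ha0 : (0:ℝ) < a := by linarith
    have hg : IntegrableOn (fun r : ℝ => 4 * a ^ (-(1:ℝ)/2) * r ^ (-(3:ℝ)/2)) (Ioi 2) :=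
      (integrableOn_Ioi_rpow_of_lt (by norm_num) (by norm_num : (0:ℝ) < 2)).const_mul _
    have hbound : |∫ r in Ioi (2:ℝ), r * besselJ 0 (r * a) / (r ^ 2 - 1)|
        ≤ ∫ r in Ioi (2:ℝ), 4 * a ^ (-(1:ℝ)/2) * r ^ (-(3:ℝ)/2) := by
      rw [← Real.norm_eq_abs]
      apply MeasureTheory.norm_integral_le_of_norm_le hg
      filter_upwards [MeasureTheory.ae_restrict_mem measurableSet_Ioi] with r hr
      have hr2 : (2:ℝ) < r := hr
      have h1 : 1 ≤ r * a := by nlinarith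
      rw [Real.norm_eq_abs]
      exact Fbound ha0 (le_of_lt hr2) h1
    have hval : ∫ r in Ioi (2:ℝ), 4 * a ^ (-(1:ℝ)/2) * r ^ (-(3:ℝ)/2)
        = 4 * a ^ (-(1:ℝ)/2) * (-(2:ℝ) ^ ((-(3:ℝ)/2) + 1) / ((-(3:ℝ)/2) + 1)) := by
      rw [MeasureTheory.integral_const_mul]
      congr 1
      exact integral_Ioi_rpow_of_lt (by norm_num) (by norm_num)
    have hv2 : (-(2:ℝ) ^ ((-(3:ℝ)/2) + 1) / ((-(3:ℝ)/2) + 1)) ≤ 2 := by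
      have h2 : ((-(3:ℝ)/2) + 1) = (-(1:ℝ)/2) := by norm_num
      rw [h2]
      have h3 : (2:ℝ) ^ (-(1:ℝ)/2) ≤ 1 :=
        Real.rpow_le_one_of_one_le_of_nonpos (by norm_num) (by norm_num)
      have h4 : (0:ℝ) < (2:ℝ) ^ (-(1:ℝ)/2) := Real.rpow_pos_of_pos (by norm_num) _
      rw [div_le_iff_of_neg (by norm_num : (-(1:ℝ)/2) < 0)]
      linarith
    calc |∫ r in Ioi (2:ℝ), r * besselJ 0 (r * a) / (r ^ 2 - 1)|
        ≤ 4 * a ^ (-(1:ℝ)/2) * (-(2:ℝ) ^ ((-(3:ℝ)/2) + 1) / ((-(3:ℝ)/2) + 1)) := by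
          rw [← hval]; exact hbound
      _ ≤ 4 * a ^ (-(1:ℝ)/2) * 2 := by
          apply mul_le_mul_of_nonneg_left hv2 (by positivity)
      _ = 8 * a ^ (-(1:ℝ)/2) := by ring
end
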